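/- Let Ξ be a finite abelian group and B : Ξ → Ξ → ℝ/ℤ a biadditive pairing which is symmetric (B x y = B y x for all x, y) or skew-symmetric (B x y = − B y x for all x, y), and let Ξ⊥ = {x ∈ Ξ | ∀ y, B x y = 0} be its radical. Then B descends to a well-defined biadditive pairing B' on the quotient group Ξ ⧸ Ξ⊥, and B' is perfect: the map from Ξ ⧸ Ξ⊥ to the group of additive homomorphisms (Ξ ⧸ Ξ⊥) →+ ℝ/ℤ sending a class c to B'(c, ·) is bijective. -/

import Mathlib

/-- Every `n`-torsion point of `ℝ/ℤ` is in the image of `ZMod.toAddCircle`. -/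
lemma aux_torsion_exists (n : ℕ) [NeZero n] (a : AddCircle (1 : ℝ)) (ha : n • a = 0) :
    ∃ j : ZMod n, ZMod.toAddCircle j = a := by
  induction a using QuotientAddGroup.induction_on with
  | H x =>
    have h0 : ((n • x : ℝ) : AddCircle (1 : ℝ)) = 0 := by
      rw [← ha]; rfl
    rw [QuotientAddGroup.eq_zero_iff] at h0
    obtain ⟨m, hm⟩ := AddSubgroup.mem_zmultiples_iff.mp h0
    refine ⟨(m : ZMod n), ?_⟩
    rw [ZMod.toAddCircle_intCast]
    congr 1
    have hn : (n : ℝ) ≠ 0 := Nat.cast_ne_zero.mpr (NeZero.ne n)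
    have : (m : ℝ) = n * x := by
      simpa [zsmul_eq_mul, nsmul_eq_mul] using hm
    field_simp [this]
    exact this

lemma aux_card_zmod_dual (n : ℕ) [NeZero n] :
    Nat.card (ZMod n →+ AddCircle (1 : ℝ)) = n := by
  classical
  have hinj : ∀ f : ZMod n →+ AddCircle (1 : ℝ), n • f 1 = 0 := by
    intro f
    rw [← map_nsmul]
    simp [ZMod.natCast_self]
  choose g hg using fun f : ZMod n →+ AddCircle (1 : ℝ) =>
    aux_torsion_exists n (f 1) (hinj f)
  have hginj : Function.Injective g := by
    intro f f' hff
    have h1 : f 1 = f' 1 := by rw [← hg f, ← hg f', hff]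
    ext k
    have hk : (k : ZMod n) = k.val • (1 : ZMod n) := by
      rw [nsmul_eq_mul, mul_one, ZMod.natCast_zmod_val]
    rw [hk, map_nsmul, map_nsmul, h1]
  have hfin : Finite (ZMod n →+ AddCircle (1 : ℝ)) := Finite.of_injective g hginj
  apply le_antisymm
  · calc Nat.card (ZMod n →+ AddCircle (1 : ℝ)) ≤ Nat.card (ZMod n) :=
          Nat.card_le_card_of_injective g hginj
      _ = n := Nat.card_zmod n
  · have : Function.Injective (fun j : ZMod n =>
        (ZMod.toAddCircle (N := n)).comp (AddMonoidHom.mulLeft j)) := by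
      intro j j' h
      have := congrArg (fun f : ZMod n →+ AddCircle (1 : ℝ) => f 1) h
      simpa using this
    calc (n : ℕ) = Nat.card (ZMod n) := (Nat.card_zmod n).symm
      _ ≤ Nat.card (ZMod n →+ AddCircle (1 : ℝ)) := Nat.card_le_card_of_injective _ this

lemma aux_card_dual (G : Type*) [AddCommGroup G] [Finite G] :
    Nat.card (G →+ AddCircle (1 : ℝ)) = Nat.card G := by
  classical
  obtain ⟨ι, _, n, hn, ⟨e⟩⟩ := AddCommGroup.equiv_directSum_zmod_of_finite' G
  have : ∀ i, NeZero (n i) := fun i => ⟨by have := hn i; omega⟩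
  have e2 : G ≃+ ((i : ι) → ZMod (n i)) := e.trans (DirectSum.linearEquivFunOnFintype ℤ ι (fun i => ZMod (n i))).toAddEquiv
  have e3 : (G →+ AddCircle (1 : ℝ)) ≃ (((i : ι) → ZMod (n i)) →+ AddCircle (1 : ℝ)) :=
    { toFun := fun f => f.comp e2.symm.toAddMonoidHom
      invFun := fun f => f.comp e2.toAddMonoidHom
      left_inv := fun f => by ext x; simp
      right_inv := fun f => by ext x; simp }
  rw [Nat.card_congr e3, Nat.card_congr (Pi.addMonoidHomAddEquiv _ _).toEquiv,
    Nat.card_congr e2.toEquiv, Nat.card_pi, Nat.card_pi]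
  exact Finset.prod_congr rfl fun i _ => by rw [aux_card_zmod_dual, Nat.card_zmod]

lemma aux_finite_dual (G : Type*) [AddCommGroup G] [Finite G] :
    Finite (G →+ AddCircle (1 : ℝ)) := by
  have : Nonempty G := ⟨0⟩
  exact Nat.finite_of_card_ne_zero (by rw [aux_card_dual]; exact Nat.card_pos.ne')

/-- The radical of a biadditive pairing valued in `ℝ/ℤ`. -/
def pairingRadical {Ξ : Type*} [AddCommGroup Ξ] (B : Ξ → Ξ → AddCircle (1 : ℝ))
    (hadd1 : ∀ x x' y, B (x + x') y = B x y + B x' y) : AddSubgroup Ξ where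
  carrier := {x | ∀ y, B x y = 0}
  zero_mem' := by
    intro y
    have h := hadd1 0 0 y
    rw [add_zero] at h
    exact left_eq_add.mp h
  add_mem' := by
    intro a b ha hb y
    rw [hadd1 a b y, ha y, hb y, add_zero]
  neg_mem' := by
    intro a ha y
    have h0 : B 0 y = 0 := by
      have h := hadd1 0 0 y
      rw [add_zero] at h
      exact left_eq_add.mp h
    have h := hadd1 a (-a) y
    rw [add_neg_cancel, h0, ha y, zero_add] at h
    exact h.symm

/-- A symmetric or skew-symmetric biadditive pairing on a finite abelian group descends to a
perfect biadditive pairing on the quotient by its radical. -/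
theorem stmt0 {Ξ : Type*} [AddCommGroup Ξ] [Finite Ξ]
    (B : Ξ → Ξ → AddCircle (1 : ℝ))
    (hadd1 : ∀ x x' y, B (x + x') y = B x y + B x' y)
    (hadd2 : ∀ x y y', B x (y + y') = B x y + B x y')
    (hsym : (∀ x y, B x y = B y x) ∨ (∀ x y, B x y = - B y x)) :
    ∃ Φ : Ξ ⧸ pairingRadical B hadd1 →+ ((Ξ ⧸ pairingRadical B hadd1) →+ AddCircle (1 : ℝ)),
      (∀ x y : Ξ, Φ (QuotientAddGroup.mk x) (QuotientAddGroup.mk y) = B x y) ∧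
      Function.Bijective Φ := by
  classical
  set R := pairingRadical B hadd1 with hR
  have hB0 : ∀ x, B x 0 = 0 := by
    intro x
    have h := hadd2 x 0 0
    rw [add_zero] at h
    exact left_eq_add.mp h
  have hright : ∀ x y, y ∈ R → B x y = 0 := by
    intro x y hy
    rcases hsym with h | h
    · rw [h]; exact hy x
    · rw [h, hy x, neg_zero]
  let b : Ξ → (Ξ →+ AddCircle (1 : ℝ)) := fun x =>
    { toFun := B x, map_zero' := hB0 x, map_add' := hadd2 x }
  let f : Ξ → ((Ξ ⧸ R) →+ AddCircle (1 : ℝ)) := fun x =>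
    QuotientAddGroup.lift R (b x) (fun y hy => hright x y hy)
  have hf : ∀ x y, f x (QuotientAddGroup.mk y) = B x y := fun x y => rfl
  let F : Ξ →+ ((Ξ ⧸ R) →+ AddCircle (1 : ℝ)) :=
    { toFun := f
      map_zero' := by
        ext y
        have h0 : (0 : Ξ) ∈ R := R.zero_mem
        exact h0 y
      map_add' := by
        intro x x'
        ext y
        exact hadd1 x x' y }
  have hFmem : ∀ x ∈ R, F x = 0 := by
    intro x hx
    ext y
    exact hx y
  refine ⟨QuotientAddGroup.lift R F hFmem, fun x y => rfl, ?_⟩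
  have : Finite (Ξ ⧸ R) := Quotient.finite _
  have hdf : Finite ((Ξ ⧸ R) →+ AddCircle (1 : ℝ)) := aux_finite_dual _
  rw [Nat.bijective_iff_injective_and_card]
  constructor
  · rw [injective_iff_map_eq_zero]
    intro c hc
    induction c using QuotientAddGroup.induction_on with
    | H x =>
      rw [QuotientAddGroup.eq_zero_iff]
      intro y
      have := congrArg (fun g : (Ξ ⧸ R) →+ AddCircle (1 : ℝ) => g (QuotientAddGroup.mk y)) hc
      exact this
  · exact (aux_card_dual _).symm
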